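/- Let p be a prime, F = F_{p^m}, θ(x) = x^{p^l}, n = gcd(l,m), k = m/n > 2. For a, b ∈ F*, the inclusion Im(f_{b,θ²}) ⊆ Im(f_{a,θ}) holds if and only if b^{θ⁴}·b^{-1} = a^{θ³}·a^{θ²}·(a·a^θ)^{-1}, where f_{c,σ}(x) = c·x^σ − x·c^σ for a field automorphism σ. -/

import Mathlib

/-- For `k > 2`, `Im(f_{b,θ²}) ⊆ Im(f_{a,θ})` iff
`b^{θ⁴}·b⁻¹ = a^{θ³}·a^{θ²}·(a·a^θ)⁻¹`. -/
theorem stmt_12 (p m l n k : ℕ) (hp : p.Prime) (hm : 0 < m) (hl : 0 < l)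
    (hn : n = Nat.gcd l m) (hk : k = m / n) (hk2 : 2 < k)
    (F : Type) [Field F] [Fintype F] (hF : Fintype.card F = p ^ m)
    (a b : F) (ha : a ≠ 0) (hb : b ≠ 0) :
    Set.range (fun x : F => b * x ^ p ^ (2 * l) - x * b ^ p ^ (2 * l)) ⊆
      Set.range (fun x : F => a * x ^ p ^ l - x * a ^ p ^ l) ↔
    b ^ p ^ (4 * l) * b⁻¹ = a ^ p ^ (3 * l) * a ^ p ^ (2 * l) * (a * a ^ p ^ l)⁻¹ := by
  haveI hfact : Fact p.Prime := ⟨hp⟩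
  haveI hring : CharP F (ringChar F) := ringChar.charP F
  obtain ⟨d, hq, hcard⟩ := FiniteField.card F (ringChar F)
  have hpq : ringChar F = p := by
    have h1 : p ∣ (ringChar F) ^ (d : ℕ) := by
      rw [← hcard, hF]; exact dvd_pow_self p hm.ne'
    exact ((Nat.prime_dvd_prime_iff_eq hp hq).mp (hp.dvd_of_dvd_pow h1)).symm
  haveI hcharF : CharP F p := hpq ▸ hring
  -- numeric facts
  have hn0 : 0 < n := by
    rw [hn]; exact Nat.gcd_pos_of_pos_right l hm
  have hnl : n ∣ l := hn ▸ Nat.gcd_dvd_left l m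
  have hnm : n ∣ m := hn ▸ Nat.gcd_dvd_right l m
  have hmk : m = n * k := by rw [hk, Nat.mul_div_cancel' hnm]
  have hcop : Nat.Coprime (l / n) k := by
    have : n * Nat.gcd (l / n) k = n * 1 := by
      rw [mul_one, ← Nat.gcd_mul_left, Nat.mul_div_cancel' hnl, ← hmk, ← hn]
    exact Nat.eq_of_mul_eq_mul_left hn0 this
  have hmlk : m ∣ l * k := ⟨l / n, by
    rw [hmk]; rw [mul_comm n k, mul_assoc, Nat.mul_div_cancel' hnl, mul_comm]⟩
  -- Frobenius basics
  have pcard : ∀ x : F, x ^ p ^ m = x := fun x => by rw [← hF]; exact FiniteField.pow_card x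
  have px : ∀ (x : F) (s t : ℕ), (x ^ p ^ s) ^ p ^ t = x ^ p ^ (s + t) := fun x s t => by
    rw [← pow_mul, ← pow_add]
  have pmul : ∀ (x : F) (j : ℕ), x ^ p ^ (m * j) = x := by
    intro x j
    induction j with
    | zero => simp
    | succ j ih =>
      have : m * (j + 1) = m * j + m := by ring
      rw [this, ← px, ih, pcard]
  have pmod : ∀ (x : F) (j : ℕ), x ^ p ^ j = x ^ p ^ (j % m) := by
    intro x j
    conv_lhs => rw [← Nat.div_add_mod j m]
    rw [← px, pmul]
  have plk : ∀ x : F, x ^ p ^ (l * k) = x := by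
    intro x
    obtain ⟨c, hc⟩ := hmlk
    rw [hc, pmul]
  -- the trace map
  set T : F → F := fun z => ∑ i ∈ Finset.range k, z ^ p ^ (l * i) with hT
  have hTfrob : ∀ z : F, T (z ^ p ^ l) = T z := by
    intro z
    have h1 : T (z ^ p ^ l) = ∑ i ∈ Finset.range k, z ^ p ^ (l * (i + 1)) := by
      refine Finset.sum_congr rfl fun i _ => ?_
      rw [px]; congr 1; ring
    have h2 : ∑ i ∈ Finset.range (k + 1), z ^ p ^ (l * i)
        = (∑ i ∈ Finset.range k, z ^ p ^ (l * (i + 1))) + z ^ p ^ (l * 0) :=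
      Finset.sum_range_succ' _ k
    have h3 : ∑ i ∈ Finset.range (k + 1), z ^ p ^ (l * i)
        = (∑ i ∈ Finset.range k, z ^ p ^ (l * i)) + z ^ p ^ (l * k) :=
      Finset.sum_range_succ _ k
    rw [h1]
    have := h3.symm.trans h2
    rw [plk] at this
    simp only [Nat.mul_zero, pow_zero, pow_one] at this
    rw [hT]
    exact (add_right_cancel this).symm
  have hTsub : ∀ u v : F, T (u - v) = T u - T v := by
    intro u v
    simp only [hT, ← Finset.sum_sub_distrib]
    exact Finset.sum_congr rfl fun i _ => sub_pow_char_pow ..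
  have hTne : ∃ w : F, T w ≠ 0 := by
    by_contra hcon
    push_neg at hcon
    set Q : Polynomial F := ∑ i ∈ Finset.range k, Polynomial.X ^ p ^ (l * i % m) with hQ
    have hev : ∀ z : F, Q.eval z = 0 := by
      intro z
      have : Q.eval z = T z := by
        simp only [hQ, Polynomial.eval_finset_sum, Polynomial.eval_pow, Polynomial.eval_X]
        exact Finset.sum_congr rfl fun i _ => (pmod z (l * i)).symm
      rw [this]; exact hcon z
    have hQ0 : Q = 0 := by
      refine Polynomial.eq_zero_of_natDegree_lt_card_of_eval_eq_zero Q Function.injective_id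
        (fun x => hev x) ?_
      have hdeg : Q.natDegree ≤ p ^ (m - 1) := by
        refine Polynomial.natDegree_sum_le_of_forall_le _ _ fun i _ => ?_
        rw [Polynomial.natDegree_X_pow]
        exact Nat.pow_le_pow_right hp.pos (by
          have := Nat.mod_lt (l * i) hm
          omega)
      calc Q.natDegree ≤ p ^ (m - 1) := hdeg
        _ < p ^ m := Nat.pow_lt_pow_right hp.one_lt (by omega)
        _ = Fintype.card F := hF.symm
    have hco : Q.coeff 1 = 1 := by
      rw [hQ, Polynomial.finset_sum_coeff]
      rw [Finset.sum_eq_single_of_mem 0 (Finset.mem_range.mpr (by omega))]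
      · simp
      · intro i hi hi0
        rw [Polynomial.coeff_X_pow, if_neg]
        intro hcontra
        have he : l * i % m = 0 := by
          by_contra h0
          exact absurd hcontra.symm (Nat.one_lt_pow h0 hp.one_lt).ne'
        have hdvd : m ∣ l * i := Nat.dvd_of_mod_eq_zero he
        have hki : k ∣ i := by
          have h4 : n * k ∣ n * ((l / n) * i) := by
            rw [← mul_assoc, Nat.mul_div_cancel' hnl, ← hmk]; exact hdvd
          have h5 : k ∣ (l / n) * i := (Nat.mul_dvd_mul_iff_left hn0).mp h4
          exact (Nat.Coprime.dvd_of_dvd_mul_left (Nat.Coprime.symm hcop) h5)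
        have : k ≤ i := Nat.le_of_dvd (Nat.pos_of_ne_zero hi0) hki
        exact absurd (Finset.mem_range.mp hi) (by omega)
    rw [hQ0] at hco
    simp at hco
  -- the constant c
  set c : F := b * b ^ p ^ (2 * l) * (a * a ^ p ^ l)⁻¹ with hc
  have hane : a ^ p ^ l ≠ 0 := pow_ne_zero _ ha
  have haa : a * a ^ p ^ l ≠ 0 := mul_ne_zero ha hane
  have hbne : b ^ p ^ (2 * l) ≠ 0 := pow_ne_zero _ hb
  have hcne : c ≠ 0 := by
    rw [hc]; exact mul_ne_zero (mul_ne_zero hb hbne) (inv_ne_zero haa)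
  -- rewriting the maps
  have ffa : ∀ x : F, a * x ^ p ^ l - x * a ^ p ^ l
      = (a * a ^ p ^ l) * ((x * a⁻¹) ^ p ^ l - x * a⁻¹) := by
    intro x
    rw [mul_pow, inv_pow]
    field_simp
  have ffb : ∀ y : F, b * y ^ p ^ (2 * l) - y * b ^ p ^ (2 * l)
      = (b * b ^ p ^ (2 * l)) * ((y * b⁻¹) ^ p ^ (2 * l) - y * b⁻¹) := by
    intro y
    rw [mul_pow, inv_pow]
    field_simp
  have hac : (a * a ^ p ^ l) * c = b * b ^ p ^ (2 * l) := by
    rw [hc]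
    field_simp
  have hlk2 : l * (k - 2) + 2 * l = l * k := by
    have h1 : l * (k - 2) + 2 * l = l * ((k - 2) + 2) := by ring
    have h2 : (k - 2) + 2 = k := by omega
    rw [h1, h2]
  have hT2 : ∀ w : F, T (w ^ p ^ (2 * l)) = T w := by
    intro w
    have h1 : (w ^ p ^ l) ^ p ^ l = w ^ p ^ (2 * l) := by
      rw [px, show l + l = 2 * l from by ring]
    rw [← h1, hTfrob, hTfrob]
  -- step 1 : range inclusion reformulated
  have hiff1 : (Set.range (fun x : F => b * x ^ p ^ (2 * l) - x * b ^ p ^ (2 * l)) ⊆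
      Set.range (fun x : F => a * x ^ p ^ l - x * a ^ p ^ l)) ↔
      ∀ y : F, ∃ x : F, c * (y ^ p ^ (2 * l) - y) = x ^ p ^ l - x := by
    constructor
    · intro h y
      obtain ⟨x, hx⟩ := h ⟨b * y, rfl⟩
      simp only at hx
      rw [ffa x, ffb (b * y),
        show b * y * b⁻¹ = y from by rw [mul_comm b y, mul_inv_cancel_right₀ hb]] at hx
      refine ⟨x * a⁻¹, ?_⟩
      have h1 : c * (y ^ p ^ (2 * l) - y)
          = (a * a ^ p ^ l)⁻¹ * ((b * b ^ p ^ (2 * l)) * (y ^ p ^ (2 * l) - y)) := by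
        rw [hc]; ring
      rw [h1, ← hx, inv_mul_cancel_left₀ haa]
    · intro h z hz
      obtain ⟨y, hy⟩ := hz
      obtain ⟨x, hx⟩ := h (y * b⁻¹)
      refine ⟨a * x, ?_⟩
      simp only at hy ⊢
      rw [← hy, ffa (a * x), ffb y,
        show a * x * a⁻¹ = x from by rw [mul_comm a x, mul_inv_cancel_right₀ ha], ← hx,
        ← mul_assoc, hac]
  -- step 2 : forward, via the trace
  have hstep : ∀ y : F, (∃ x : F, c * (y ^ p ^ (2 * l) - y) = x ^ p ^ l - x) →
      T (c ^ p ^ (l * (k - 2)) * y) = T (c * y) := by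
    intro y ⟨x, hx⟩
    have h1 : T (c * y ^ p ^ (2 * l) - c * y) = 0 := by
      rw [← mul_sub, hx, hTsub, hTfrob, sub_self]
    have h2 : (c ^ p ^ (l * (k - 2)) * y) ^ p ^ (2 * l) = c * y ^ p ^ (2 * l) := by
      rw [mul_pow, px, hlk2, plk]
    rw [hTsub, ← h2, hT2, sub_eq_zero] at h1
    exact h1
  have hforward2 : (∀ y : F, ∃ x : F, c * (y ^ p ^ (2 * l) - y) = x ^ p ^ l - x) →
      c ^ p ^ (2 * l) = c := by
    intro h
    have he : c ^ p ^ (l * (k - 2)) = c := by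
      by_contra hne
      obtain ⟨w, hw⟩ := hTne
      have hd : c ^ p ^ (l * (k - 2)) - c ≠ 0 := sub_ne_zero.mpr hne
      set z : F := (c ^ p ^ (l * (k - 2)) - c)⁻¹ * w with hz
      have h1 := hstep z (h z)
      have heq : c ^ p ^ (l * (k - 2)) * z - c * z = w := by
        rw [← sub_mul, hz, mul_inv_cancel_left₀ hd]
      have h0 : T w = 0 := by
        rw [← heq, hTsub, h1, sub_self]
      exact hw h0
    calc c ^ p ^ (2 * l) = (c ^ p ^ (l * (k - 2))) ^ p ^ (2 * l) := by rw [he]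
      _ = c ^ p ^ (l * (k - 2) + 2 * l) := px ..
      _ = c := by rw [hlk2, plk]
  have hbackward2 : c ^ p ^ (2 * l) = c →
      ∀ y : F, ∃ x : F, c * (y ^ p ^ (2 * l) - y) = x ^ p ^ l - x := by
    intro hc2 y
    refine ⟨(c * y) ^ p ^ l + c * y, ?_⟩
    rw [add_pow_char_pow, px, show l + l = 2 * l from by ring, mul_pow, hc2]
    ring
  -- step 3 : algebraic translation of c^{θ²} = c
  have hcp : c ^ p ^ (2 * l) = b ^ p ^ (2 * l) * b ^ p ^ (4 * l)
      * (a ^ p ^ (2 * l) * a ^ p ^ (3 * l))⁻¹ := by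
    rw [hc, mul_pow, mul_pow, inv_pow, mul_pow, px b (2 * l) (2 * l), px a l (2 * l),
      show 2 * l + 2 * l = 4 * l from by ring, show l + 2 * l = 3 * l from by ring]
  have ha2 : a ^ p ^ (2 * l) ≠ 0 := pow_ne_zero _ ha
  have ha3 : a ^ p ^ (3 * l) ≠ 0 := pow_ne_zero _ ha
  have hb4 : b ^ p ^ (4 * l) ≠ 0 := pow_ne_zero _ hb
  have hiff3 : c ^ p ^ (2 * l) = c ↔
      b ^ p ^ (4 * l) * b⁻¹ = a ^ p ^ (3 * l) * a ^ p ^ (2 * l) * (a * a ^ p ^ l)⁻¹ := by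
    rw [hcp, hc]
    constructor
    · intro h
      field_simp at h ⊢
      apply mul_left_cancel₀ hbne
      linear_combination b ^ p ^ (2 * l) * h
    · intro h
      field_simp at h ⊢
      linear_combination h
  rw [hiff1, ← hiff3]
  exact ⟨hforward2, hbackward2⟩
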